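/- Let P be strictly stochastically transitive on S_n and σ*_P(i) = 1 + Σ_{j≠i} 𝟙{p_{i,j} < 1/2}. Then σ*_P is the unique minimizer of L_P(σ) = Σ_{i<j} |p_{i,j} − 𝟙{σ(i)<σ(j)}| over S_n, and it satisfies (p_{i,j} − 1/2)(σ*_P(j) − σ*_P(i)) > 0 for all i < j. -/

import Mathlib

open Finset
open scoped Classical

/-- Pairwise marginal `p_{i,j} = P(σ(i) < σ(j))`. -/
def pairwiseMarginal {n : ℕ} (P : Equiv.Perm (Fin n) → ℝ) (i j : Fin n) : ℝ :=
  ∑ σ : Equiv.Perm (Fin n), if σ i < σ j then P σ else 0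

/-- Copeland rank: `σ*_P(i) = 1 + #{j ≠ i : p_{i,j} < 1/2}`. -/
noncomputable def copelandRank {n : ℕ} (P : Equiv.Perm (Fin n) → ℝ)
    (i : Fin n) : ℕ :=
  1 + (Finset.univ.filter (fun j => j ≠ i ∧ pairwiseMarginal P i j < 1 / 2)).card

/-- `L_P(σ) = Σ_{i<j} |p_{i,j} - 𝟙{σ(i)<σ(j)}|`. -/
noncomputable def kemenyRisk {n : ℕ} (P : Equiv.Perm (Fin n) → ℝ)
    (σ : Equiv.Perm (Fin n)) : ℝ :=
  ∑ p ∈ Finset.univ.filter (fun p : Fin n × Fin n => p.1 < p.2),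
    |pairwiseMarginal P p.1 p.2 - if σ p.1 < σ p.2 then 1 else 0|

lemma pm_nonneg {n : ℕ} (P : Equiv.Perm (Fin n) → ℝ) (hP0 : ∀ σ, 0 ≤ P σ)
    (i j : Fin n) : 0 ≤ pairwiseMarginal P i j := by
  refine Finset.sum_nonneg fun σ _ => ?_
  split <;> simp [hP0 σ]

lemma pm_self {n : ℕ} (P : Equiv.Perm (Fin n) → ℝ) (i : Fin n) :
    pairwiseMarginal P i i = 0 := by
  simp [pairwiseMarginal]

lemma pm_add {n : ℕ} (P : Equiv.Perm (Fin n) → ℝ)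
    (hP1 : ∑ σ : Equiv.Perm (Fin n), P σ = 1) {i j : Fin n} (hij : i ≠ j) :
    pairwiseMarginal P i j + pairwiseMarginal P j i = 1 := by
  rw [pairwiseMarginal, pairwiseMarginal, ← Finset.sum_add_distrib, ← hP1]
  refine Finset.sum_congr rfl fun σ _ => ?_
  have h : σ i ≠ σ j := fun h => hij (σ.injective h)
  rcases h.lt_or_gt with h' | h'
  · rw [if_pos h', if_neg (not_lt.mpr h'.le), add_zero]
  · rw [if_neg (not_lt.mpr h'.le), if_pos h', zero_add]

/-- For a strictly stochastically transitive `P`, the Copeland ranking `σ*_P`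
is the unique minimizer of `L_P` over `S_n` and satisfies
`(p_{i,j} - 1/2)(σ*_P(j) - σ*_P(i)) > 0` for all `i < j` (ranks of a
permutation `σ` being `σ(i)+1 ∈ {1,…,n}`). -/
theorem copeland_unique_kemeny_median {n : ℕ} (P : Equiv.Perm (Fin n) → ℝ)
    (hP0 : ∀ σ, 0 ≤ P σ) (hP1 : ∑ σ : Equiv.Perm (Fin n), P σ = 1)
    (hST : ∀ i j k : Fin n, 1 / 2 ≤ pairwiseMarginal P i j →
      1 / 2 ≤ pairwiseMarginal P j k → 1 / 2 ≤ pairwiseMarginal P i k)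
    (hstrict : ∀ i j : Fin n, i ≠ j → pairwiseMarginal P i j ≠ 1 / 2) :
    (∃! σ₀ : Equiv.Perm (Fin n), ∀ σ, kemenyRisk P σ₀ ≤ kemenyRisk P σ) ∧
    (∀ σ₀ : Equiv.Perm (Fin n), (∀ σ, kemenyRisk P σ₀ ≤ kemenyRisk P σ) →
      (∀ i, (σ₀ i : ℕ) + 1 = copelandRank P i) ∧
      ∀ i j : Fin n, i < j →
        0 < (pairwiseMarginal P i j - 1 / 2) *
          ((copelandRank P j : ℝ) - (copelandRank P i : ℝ))) := by
  classical
  have hpnn := pm_nonneg P hP0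
  have hple : ∀ i j : Fin n, pairwiseMarginal P i j ≤ 1 := by
    intro i j
    by_cases hij : i = j
    · subst hij; rw [pm_self]; norm_num
    · have h1 := pm_add P hP1 hij
      have h2 := hpnn j i
      linarith
  have hasymm : ∀ i j : Fin n, 1/2 < pairwiseMarginal P i j →
      ¬ (1/2 < pairwiseMarginal P j i) := by
    intro i j hij hji
    by_cases h : i = j
    · subst h; rw [pm_self] at hij; norm_num at hij
    · have := pm_add P hP1 h; linarith
  have htotal : ∀ i j : Fin n, i ≠ j →
      1/2 < pairwiseMarginal P i j ∨ 1/2 < pairwiseMarginal P j i := by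
    intro i j h
    have hadd := pm_add P hP1 h
    rcases lt_or_gt_of_ne (hstrict i j h) with h' | h'
    · right; linarith
    · left; exact h'
  have htrans : ∀ i j k : Fin n, 1/2 < pairwiseMarginal P i j →
      1/2 < pairwiseMarginal P j k → 1/2 < pairwiseMarginal P i k := by
    intro i j k hij hjk
    have hik : i ≠ k := by rintro rfl; exact hasymm i j hij hjk
    exact lt_of_le_of_ne (hST i j k hij.le hjk.le) (Ne.symm (hstrict i k hik))
  -- number of items beating i
  set f : Fin n → ℕ :=
    fun i => (Finset.univ.filter (fun k => 1/2 < pairwiseMarginal P k i)).card with hf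
  have hmono : ∀ i j : Fin n, 1/2 < pairwiseMarginal P i j → f i < f j := by
    intro i j hij
    apply Finset.card_lt_card
    have hsub : (Finset.univ.filter (fun k => 1/2 < pairwiseMarginal P k i)) ⊆
        (Finset.univ.filter (fun k => 1/2 < pairwiseMarginal P k j)) := by
      intro k hk
      simp only [Finset.mem_filter, Finset.mem_univ, true_and] at hk ⊢
      exact htrans k i j hk hij
    refine (Finset.ssubset_iff_of_subset hsub).mpr ⟨i, ?_, ?_⟩
    · simp only [Finset.mem_filter, Finset.mem_univ, true_and]; exact hij
    · simp only [Finset.mem_filter, Finset.mem_univ, true_and]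
      rw [pm_self]; norm_num
  have hflt : ∀ i, f i < n := by
    intro i
    have hss : (Finset.univ.filter (fun k => 1/2 < pairwiseMarginal P k i)) ⊂
        (Finset.univ : Finset (Fin n)) := by
      rw [Finset.ssubset_univ_iff]
      intro h
      have hi : i ∈ Finset.univ.filter (fun k => 1/2 < pairwiseMarginal P k i) := by
        rw [h]; exact Finset.mem_univ i
      simp only [Finset.mem_filter, Finset.mem_univ, true_and] at hi
      rw [pm_self] at hi; norm_num at hi
    have h2 := Finset.card_lt_card hss
    rw [Finset.card_univ, Fintype.card_fin] at h2
    exact h2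
  set g : Fin n → Fin n := fun i => ⟨f i, hflt i⟩ with hg
  have hginj : Function.Injective g := by
    intro i j hgij
    by_contra hne
    have hv : f i = f j := congrArg Fin.val hgij
    rcases htotal i j hne with h | h
    · exact absurd hv (Nat.ne_of_lt (hmono i j h))
    · exact absurd hv.symm (Nat.ne_of_lt (hmono j i h))
  set e : Equiv.Perm (Fin n) := Equiv.ofBijective g (Finite.injective_iff_bijective.mp hginj)
    with he_def
  have he : ∀ i, e i = g i := fun i => rfl
  have hev : ∀ i j : Fin n, e i < e j ↔ f i < f j := by
    intro i j
    rw [he, he, Fin.lt_def]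
  have helt : ∀ i j : Fin n, i ≠ j → (e i < e j ↔ 1/2 < pairwiseMarginal P i j) := by
    intro i j hne
    rw [hev]
    constructor
    · intro h
      rcases htotal i j hne with h' | h'
      · exact h'
      · exact absurd (hmono j i h') (Nat.lt_asymm h)
    · exact hmono i j
  -- per-pair strict comparison
  have hkey : ∀ (σ : Equiv.Perm (Fin n)) (i j : Fin n), i ≠ j →
      ¬((σ i < σ j) ↔ (e i < e j)) →
      |pairwiseMarginal P i j - if e i < e j then 1 else 0| <
      |pairwiseMarginal P i j - if σ i < σ j then 1 else 0| := by
    intro σ i j hne hiff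
    rcases htotal i j hne with h | h
    · have he' : e i < e j := (helt i j hne).mpr h
      have hs : ¬ σ i < σ j := fun hs => hiff (iff_of_true hs he')
      rw [if_pos he', if_neg hs, sub_zero, abs_of_nonneg (hpnn i j),
        abs_of_nonpos (by linarith [hple i j])]
      linarith
    · have hpij : pairwiseMarginal P i j < 1/2 := by
        have := pm_add P hP1 hne; linarith
      have he' : ¬ e i < e j := by
        rw [helt i j hne]; exact not_lt.mpr hpij.le
      have hs : σ i < σ j := by
        by_contra hs
        exact hiff (iff_of_false hs he')
      rw [if_neg he', if_pos hs, sub_zero, abs_of_nonneg (hpnn i j),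
        abs_of_nonpos (by linarith [hple i j])]
      linarith
  have hle : ∀ (σ : Equiv.Perm (Fin n)) (i j : Fin n), i ≠ j →
      |pairwiseMarginal P i j - if e i < e j then 1 else 0| ≤
      |pairwiseMarginal P i j - if σ i < σ j then 1 else 0| := by
    intro σ i j hne
    by_cases hiff : (σ i < σ j) ↔ (e i < e j)
    · rw [if_congr hiff rfl rfl]
    · exact (hkey σ i j hne hiff).le
  have hmin : ∀ σ, kemenyRisk P e ≤ kemenyRisk P σ := by
    intro σ
    refine Finset.sum_le_sum fun q hq => ?_
    simp only [Finset.mem_filter, Finset.mem_univ, true_and] at hq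
    exact hle σ q.1 q.2 (ne_of_lt hq)
  have hstrictmin : ∀ σ : Equiv.Perm (Fin n), σ ≠ e →
      kemenyRisk P e < kemenyRisk P σ := by
    intro σ hne
    have hex : ∃ i j : Fin n, i < j ∧ ¬((σ i < σ j) ↔ (e i < e j)) := by
      by_contra hcon
      push_neg at hcon
      apply hne
      have hall : ∀ i j : Fin n, i ≠ j → (e i < e j → σ i < σ j) := by
        intro i j hij hlt
        rcases lt_or_gt_of_ne hij with h | h
        · exact (hcon i j h).mpr hlt
        · by_contra hs
          have h0 : σ j ≠ σ i := fun hh => hij (σ.injective hh).symm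
          have h1 : σ j < σ i := h0.lt_or_gt.resolve_right (by simpa using hs)
          have h2 := (hcon j i h).mp h1
          exact absurd hlt (not_lt.mpr h2.le)
      have hgm : StrictMono (fun a => σ (e.symm a)) := by
        intro a b hab
        apply hall (e.symm a) (e.symm b)
        · intro hh
          exact (ne_of_lt hab) (by rw [← e.apply_symm_apply a, ← e.apply_symm_apply b, hh])
        · simpa using hab
      have hid : (fun a => σ (e.symm a)) = id := by
        apply (hgm.range_inj strictMono_id).mp
        rw [Set.range_id]
        exact Set.range_eq_univ.mpr (σ.surjective.comp e.symm.surjective)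
      refine Equiv.ext fun i => ?_
      have hi := congrFun hid (e i)
      simpa using hi
    obtain ⟨i, j, hij, hmis⟩ := hex
    unfold kemenyRisk
    refine Finset.sum_lt_sum (fun q hq => ?_) ⟨(i, j), by simp [hij], ?_⟩
    · simp only [Finset.mem_filter, Finset.mem_univ, true_and] at hq
      exact hle σ q.1 q.2 (ne_of_lt hq)
    · exact hkey σ i j (ne_of_lt hij) hmis
  have huniq : ∀ τ : Equiv.Perm (Fin n), (∀ σ, kemenyRisk P τ ≤ kemenyRisk P σ) → τ = e := by
    intro τ hτ
    by_contra h
    exact absurd (hτ e) (not_le.mpr (hstrictmin τ h))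
  have hcr : ∀ i, copelandRank P i = 1 + f i := by
    intro i
    unfold copelandRank
    congr 2
    ext j
    simp only [Finset.mem_filter, Finset.mem_univ, true_and]
    constructor
    · rintro ⟨hne, hlt⟩
      have := pm_add P hP1 hne
      linarith
    · intro h
      have hne : j ≠ i := by rintro rfl; rw [pm_self] at h; norm_num at h
      have := pm_add P hP1 hne.symm
      exact ⟨hne, by linarith⟩
  constructor
  · exact ⟨e, hmin, huniq⟩
  · intro σ₀ hσ₀
    have heq : σ₀ = e := huniq σ₀ hσ₀
    subst heq
    constructor
    · intro i
      rw [hcr i, he i]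
      simp [hg, add_comm]
    · intro i j hij
      have hne : i ≠ j := ne_of_lt hij
      rcases htotal i j hne with h | h
      · have h1 : f i < f j := hmono i j h
        have h2 : (copelandRank P j : ℝ) - (copelandRank P i : ℝ) > 0 := by
          rw [hcr i, hcr j]
          push_cast
          have : (f i : ℝ) < f j := Nat.cast_lt.mpr h1
          linarith
        exact mul_pos (by linarith) h2
      · have hpij : pairwiseMarginal P i j < 1/2 := by
          have := pm_add P hP1 hne; linarith
        have h1 : f j < f i := hmono j i h
        have h2 : (copelandRank P j : ℝ) - (copelandRank P i : ℝ) < 0 := by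
          rw [hcr i, hcr j]
          push_cast
          have : (f j : ℝ) < f i := Nat.cast_lt.mpr h1
          linarith
        exact mul_pos_of_neg_of_neg (by linarith) h2
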